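/- Let ψ₁,…,ψ_m be unit vectors in ℂ^d with priors p_k ≥ 0, Σ p_k = 1, and let W₁,…,W_m ≥ 0 be weights such that S := Σ_ℓ W_ℓ |ψ_ℓ⟩⟨ψ_ℓ| is positive definite on ℂ^d; write Λ := S^{1/2} for its unique positive definite square root. If p_k ⟨ψ_k, Λ^{-1} ψ_k⟩ ≤ 1 for all k, with equality whenever W_k > 0, then the Belavkin weighted square-root measurement M_k = Λ^{-1} W_k |ψ_k⟩⟨ψ_k| Λ^{-1} is optimal: for every POVM (N_k) on ℂ^d, Σ_k p_k ⟨ψ_k, M_k ψ_k⟩ ≥ Σ_k p_k ⟨ψ_k, N_k ψ_k⟩. -/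

import Mathlib

open Matrix Filter
open scoped ComplexOrder

noncomputable section

/-- The rank-one projector `|ψ⟩⟨ψ|` as a matrix. -/
def proj {d : ℕ} (ψ : Fin d → ℂ) : Matrix (Fin d) (Fin d) ℂ := vecMulVec ψ (star ψ)

/-- The (real) expectation value `⟨ψ, M ψ⟩`. -/
def expVal {d : ℕ} (M : Matrix (Fin d) (Fin d) ℂ) (ψ : Fin d → ℂ) : ℝ :=
  (star ψ ⬝ᵥ M *ᵥ ψ).re

/-- A POVM: a finite family of PSD matrices summing to the identity. -/
def IsPOVM {d m : ℕ} (M : Fin m → Matrix (Fin d) (Fin d) ℂ) : Prop :=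
  (∀ k, (M k).PosSemidef) ∧ ∑ k, M k = 1

/-- The positive semidefinite square root of a positive semidefinite matrix
(restored with the definition it had in Mathlib of December 2024). -/
def Matrix.PosSemidef.sqrt {n 𝕜 : Type*} [Fintype n] [RCLike 𝕜] [DecidableEq n]
    {A : Matrix n n 𝕜} (hA : A.PosSemidef) : Matrix n n 𝕜 :=
  hA.1.eigenvectorUnitary.1 * diagonal ((↑) ∘ (√·) ∘ hA.1.eigenvalues) *
  (star hA.1.eigenvectorUnitary : Matrix n n 𝕜)

lemma Matrix.PosSemidef.posSemidef_sqrt {n 𝕜 : Type*} [Fintype n] [RCLike 𝕜] [DecidableEq n]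
    {A : Matrix n n 𝕜} (hA : A.PosSemidef) : hA.sqrt.PosSemidef := by
  unfold Matrix.PosSemidef.sqrt
  have hD : (diagonal ((↑) ∘ (√·) ∘ hA.1.eigenvalues) : Matrix n n 𝕜).PosSemidef :=
    PosSemidef.diagonal (fun i => RCLike.ofReal_nonneg.mpr (Real.sqrt_nonneg _))
  rw [Matrix.star_eq_conjTranspose]
  exact hD.mul_mul_conjTranspose_same _

lemma Matrix.PosSemidef.sqrt_mul_self {n 𝕜 : Type*} [Fintype n] [RCLike 𝕜] [DecidableEq n]
    {A : Matrix n n 𝕜} (hA : A.PosSemidef) : hA.sqrt * hA.sqrt = A := by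
  have hspec := hA.1.spectral_theorem
  rw [Unitary.conjStarAlgAut_apply] at hspec
  conv_rhs => rw [hspec]
  unfold Matrix.PosSemidef.sqrt
  have hU : (star hA.1.eigenvectorUnitary : Matrix n n 𝕜) * hA.1.eigenvectorUnitary.1 = 1 :=
    Unitary.coe_star_mul_self _
  have hDD : (diagonal ((↑) ∘ (√·) ∘ hA.1.eigenvalues) : Matrix n n 𝕜) *
      diagonal ((↑) ∘ (√·) ∘ hA.1.eigenvalues) = diagonal (RCLike.ofReal ∘ hA.1.eigenvalues) := by
    rw [diagonal_mul_diagonal]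
    congr 1
    funext i
    simp only [Function.comp_apply]
    rw [← RCLike.ofReal_mul, Real.mul_self_sqrt (hA.eigenvalues_nonneg i)]
  calc _ = hA.1.eigenvectorUnitary.1 * ((diagonal ((↑) ∘ (√·) ∘ hA.1.eigenvalues) : Matrix n n 𝕜) *
        ((star hA.1.eigenvectorUnitary : Matrix n n 𝕜) * hA.1.eigenvectorUnitary.1) *
        diagonal ((↑) ∘ (√·) ∘ hA.1.eigenvalues)) *
        (star hA.1.eigenvectorUnitary : Matrix n n 𝕜) := by simp only [Matrix.mul_assoc]
    _ = _ := by rw [hU, Matrix.mul_one, hDD]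

section Helpers

variable {d : ℕ}

lemma proj_mulVec (ψ x : Fin d → ℂ) : proj ψ *ᵥ x = (star ψ ⬝ᵥ x) • ψ := by
  ext i
  simp only [proj, Matrix.mulVec, Matrix.vecMulVec_apply, dotProduct, Pi.smul_apply,
    smul_eq_mul, Finset.sum_mul]
  exact Finset.sum_congr rfl fun j _ => by simp [mul_comm, mul_left_comm]

lemma proj_isHermitian (ψ : Fin d → ℂ) : (proj ψ).IsHermitian := by
  refine Matrix.ext fun i j => ?_
  simp [proj, Matrix.conjTranspose_apply, Matrix.vecMulVec_apply, mul_comm]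

lemma trace_proj_mul (ψ : Fin d → ℂ) (B : Matrix (Fin d) (Fin d) ℂ) :
    Matrix.trace (proj ψ * B) = star ψ ⬝ᵥ B *ᵥ ψ := by
  simp only [Matrix.trace, Matrix.diag_apply, Matrix.mul_apply, proj, Matrix.vecMulVec_apply,
    dotProduct, Matrix.mulVec, Finset.mul_sum]
  rw [Finset.sum_comm]
  exact Finset.sum_congr rfl fun j _ => Finset.sum_congr rfl fun i _ => by ring

lemma trace_posSemidef_nonneg {A : Matrix (Fin d) (Fin d) ℂ} (hA : A.PosSemidef) :
    0 ≤ Matrix.trace A := by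
  refine Finset.sum_nonneg fun i _ => ?_
  have h := hA.dotProduct_mulVec_nonneg (Pi.single i 1)
  simpa [dotProduct, Matrix.mulVec, Pi.single_apply, apply_ite, Finset.sum_ite_eq,
    Finset.sum_ite_eq'] using h

lemma trace_mul_posSemidef_nonneg {A B : Matrix (Fin d) (Fin d) ℂ}
    (hA : A.PosSemidef) (hB : B.PosSemidef) : 0 ≤ Matrix.trace (A * B) := by
  obtain ⟨C, rfl⟩ : ∃ C, A = Cᴴ * C := ⟨hA.sqrt, by rw [hA.posSemidef_sqrt.1.eq, hA.sqrt_mul_self]⟩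
  rw [Matrix.mul_assoc, Matrix.trace_mul_comm]
  exact trace_posSemidef_nonneg (hB.mul_mul_conjTranspose_same C)

lemma sub_proj_posSemidef {Λ : Matrix (Fin d) (Fin d) ℂ} (hΛ : Λ.PosSemidef)
    (hdet : IsUnit Λ.det) (ψ : Fin d → ℂ) (pp : ℝ) (hp : 0 ≤ pp)
    (hle : pp * (star ψ ⬝ᵥ Λ⁻¹ *ᵥ ψ).re ≤ 1) :
    (Λ - (pp : ℂ) • proj ψ).PosSemidef := by
  have hT : (hΛ.sqrt).PosSemidef := hΛ.posSemidef_sqrt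
  set T := hΛ.sqrt with hTdef
  have hTT : T * T = Λ := hΛ.sqrt_mul_self
  have hTH : Tᴴ = T := hT.1
  set b := Λ⁻¹ *ᵥ ψ with hb
  have hΛb : Λ *ᵥ b = ψ := by
    rw [hb, Matrix.mulVec_mulVec, Matrix.mul_nonsing_inv _ hdet, Matrix.one_mulVec]
  clear_value b
  have quad : ∀ y : Fin d → ℂ, star y ⬝ᵥ Λ *ᵥ y = star (T *ᵥ y) ⬝ᵥ (T *ᵥ y) := by
    intro y
    calc star y ⬝ᵥ Λ *ᵥ y = star y ⬝ᵥ (T *ᵥ (T *ᵥ y)) := by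
          rw [Matrix.mulVec_mulVec, hTT]
      _ = (star y ᵥ* T) ⬝ᵥ (T *ᵥ y) := Matrix.dotProduct_mulVec _ _ _
      _ = star (T *ᵥ y) ⬝ᵥ (T *ᵥ y) := by rw [star_mulVec, hTH]
  have hstarψ : star ψ = star b ᵥ* Λ := by rw [← hΛb, star_mulVec, hΛ.1.eq]
  have cross : ∀ y : Fin d → ℂ, star ψ ⬝ᵥ y = star (T *ᵥ b) ⬝ᵥ (T *ᵥ y) := by
    intro y
    calc star ψ ⬝ᵥ y = (star b ᵥ* Λ) ⬝ᵥ y := by rw [hstarψ]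
      _ = star b ⬝ᵥ (Λ *ᵥ y) := (Matrix.dotProduct_mulVec _ _ _).symm
      _ = star b ⬝ᵥ (T *ᵥ (T *ᵥ y)) := by rw [Matrix.mulVec_mulVec, hTT]
      _ = (star b ᵥ* T) ⬝ᵥ (T *ᵥ y) := Matrix.dotProduct_mulVec _ _ _
      _ = star (T *ᵥ b) ⬝ᵥ (T *ᵥ y) := by rw [star_mulVec, hTH]
  -- Euclidean space vectors
  set u : EuclideanSpace ℂ (Fin d) := (WithLp.equiv 2 (Fin d → ℂ)).symm (T *ᵥ b) with hu
  have hub : inner ℂ u u = star ψ ⬝ᵥ b := by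
    rw [show inner ℂ u u = star (T *ᵥ b) ⬝ᵥ (T *ᵥ b) from dotProduct_comm _ _, ← cross b]
  have hunorm : pp * ‖u‖ ^ 2 ≤ 1 := by
    have h2 : (star ψ ⬝ᵥ b).re = ‖u‖ ^ 2 := by
      rw [← hub, ← inner_self_eq_norm_sq (𝕜 := ℂ) u, RCLike.re_to_complex]
    rw [← h2]; exact hle
  refine Matrix.PosSemidef.of_dotProduct_mulVec_nonneg ?_ ?_
  · refine (hΛ.1).sub ?_
    show ((pp : ℂ) • proj ψ)ᴴ = (pp : ℂ) • proj ψ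
    rw [Matrix.conjTranspose_smul, (proj_isHermitian ψ).eq]
    congr 1
    simp [Complex.star_def, Complex.conj_ofReal]
  · intro x
    set v : EuclideanSpace ℂ (Fin d) := (WithLp.equiv 2 (Fin d → ℂ)).symm (T *ᵥ x) with hv
    have hz : star ψ ⬝ᵥ x = inner ℂ u v := by
      rw [show inner ℂ u v = star (T *ᵥ b) ⬝ᵥ (T *ᵥ x) from dotProduct_comm _ _, ← cross x]
    have hQ : star x ⬝ᵥ Λ *ᵥ x = inner ℂ v v := by
      rw [quad x, show inner ℂ v v = star (T *ᵥ x) ⬝ᵥ (T *ᵥ x) from dotProduct_comm _ _]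
    have hQre : (star x ⬝ᵥ Λ *ᵥ x).re = ‖v‖ ^ 2 := by
      rw [hQ, ← inner_self_eq_norm_sq (𝕜 := ℂ) v, RCLike.re_to_complex]
    have hQim : (star x ⬝ᵥ Λ *ᵥ x).im = 0 := ((Complex.le_def.mp (hΛ.dotProduct_mulVec_nonneg x)).2).symm
    have hzz : (star ψ ⬝ᵥ x) * star (star ψ ⬝ᵥ x)
        = ((Complex.normSq (star ψ ⬝ᵥ x) : ℝ) : ℂ) := by
      rw [Complex.star_def, Complex.mul_conj]
    have hE : star x ⬝ᵥ (Λ - (pp : ℂ) • proj ψ) *ᵥ x =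
        star x ⬝ᵥ Λ *ᵥ x - ((pp * Complex.normSq (star ψ ⬝ᵥ x) : ℝ) : ℂ) := by
      rw [Matrix.sub_mulVec, dotProduct_sub, Matrix.smul_mulVec,
        dotProduct_smul, proj_mulVec, dotProduct_smul, smul_eq_mul, smul_eq_mul]
      rw [show star x ⬝ᵥ ψ = star (star ψ ⬝ᵥ x) from star_dotProduct (v := x) (w := ψ)]
      rw [show (star ψ ⬝ᵥ x) * star (star ψ ⬝ᵥ x)
        = ((Complex.normSq (star ψ ⬝ᵥ x) : ℝ) : ℂ) from hzz]
      push_cast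
      ring
    have hnormSq : Complex.normSq (star ψ ⬝ᵥ x) = ‖inner ℂ u v‖ ^ 2 := by
      rw [hz, Complex.sq_norm]
    rw [hE, Complex.le_def]
    have hcs : ‖inner ℂ u v‖ ≤ ‖u‖ * ‖v‖ := norm_inner_le_norm u v
    have h2 : ‖inner ℂ u v‖ ^ 2 ≤ ‖u‖ ^ 2 * ‖v‖ ^ 2 := by
      calc ‖inner ℂ u v‖ ^ 2 ≤ (‖u‖ * ‖v‖) ^ 2 :=
            pow_le_pow_left₀ (norm_nonneg _) hcs 2
        _ = ‖u‖ ^ 2 * ‖v‖ ^ 2 := by ring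
    constructor
    · simp only [Complex.zero_re, Complex.sub_re, Complex.ofReal_re, hQre, hnormSq]
      nlinarith [norm_nonneg v, sq_nonneg ‖v‖, sq_nonneg ‖u‖,
        mul_nonneg hp (sq_nonneg ‖inner ℂ u v‖)]
    · simp [Complex.sub_im, hQim]

end Helpers

/-- sufficiency direction of Belavkin's theorem: with `Λ = S^{1/2}`, if
`p k * ⟨ψ k, Λ⁻¹ ψ k⟩ ≤ 1` for all `k`, with equality whenever `W k > 0`, then the Belavkin
weighted square-root measurement `M k = Λ⁻¹ (W k |ψ k⟩⟨ψ k|) Λ⁻¹` is optimal. -/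
theorem belavkin_sufficiency {d m : ℕ}
    (ψ : Fin m → Fin d → ℂ) (hψ : ∀ k, star (ψ k) ⬝ᵥ ψ k = 1)
    (p : Fin m → ℝ) (hp : ∀ k, 0 ≤ p k) (hp1 : ∑ k, p k = 1)
    (W : Fin m → ℝ) (hW : ∀ k, 0 ≤ W k)
    (hS : (∑ ℓ, W ℓ • proj (ψ ℓ)).PosDef)
    (M : Fin m → Matrix (Fin d) (Fin d) ℂ)
    (hM : ∀ k, M k = (hS.posSemidef.sqrt)⁻¹ * (W k • proj (ψ k)) * (hS.posSemidef.sqrt)⁻¹)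
    (hle : ∀ k, p k * (star (ψ k) ⬝ᵥ (hS.posSemidef.sqrt)⁻¹ *ᵥ ψ k).re ≤ 1)
    (heq : ∀ k, 0 < W k → p k * (star (ψ k) ⬝ᵥ (hS.posSemidef.sqrt)⁻¹ *ᵥ ψ k).re = 1) :
    ∀ N : Fin m → Matrix (Fin d) (Fin d) ℂ, IsPOVM N →
      ∑ k, p k * expVal (N k) (ψ k) ≤ ∑ k, p k * expVal (M k) (ψ k) := by
  intro N hN
  have hΛ : (hS.posSemidef.sqrt).PosSemidef := hS.posSemidef.posSemidef_sqrt
  set Λ := hS.posSemidef.sqrt with hΛdef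
  have hΛΛ : Λ * Λ = ∑ ℓ, W ℓ • proj (ψ ℓ) := hS.posSemidef.sqrt_mul_self
  have hdetS : IsUnit (∑ ℓ, W ℓ • proj (ψ ℓ)).det := isUnit_iff_ne_zero.mpr hS.det_pos.ne'
  have hdet : IsUnit Λ.det := by
    have h : Λ.det * Λ.det = (∑ ℓ, W ℓ • proj (ψ ℓ)).det := by
      rw [← Matrix.det_mul, hΛΛ]
    exact isUnit_of_mul_isUnit_left (h ▸ hdetS)
  -- the quantities c k
  set c : Fin m → ℂ := fun k => star (ψ k) ⬝ᵥ Λ⁻¹ *ᵥ ψ k with hc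
  have hcim : ∀ k, c k = (((c k).re : ℝ) : ℂ) := by
    intro k
    have h0 : 0 ≤ c k := hΛ.inv.dotProduct_mulVec_nonneg (ψ k)
    have him : (c k).im = 0 := ((Complex.le_def.mp h0).2).symm
    exact (Complex.ext (by simp) (by simp [him])).symm
  -- Step 1: pointwise bound against trace (Λ * N k)
  have step1 : ∀ k, p k * expVal (N k) (ψ k) ≤ (Matrix.trace (Λ * N k)).re := by
    intro k
    have h0 := trace_mul_posSemidef_nonneg
      (sub_proj_posSemidef hΛ hdet (ψ k) (p k) (hp k) (hle k)) (hN.1 k)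
    rw [Matrix.sub_mul, Matrix.trace_sub, smul_mul_assoc, Matrix.trace_smul,
      trace_proj_mul] at h0
    have h1 : 0 ≤ (Matrix.trace (Λ * N k)).re
        - ((p k : ℂ) • (star (ψ k) ⬝ᵥ N k *ᵥ ψ k)).re := by
      have := (Complex.le_def.mp h0).1
      simpa [Complex.sub_re] using this
    have h2 : ((p k : ℂ) • (star (ψ k) ⬝ᵥ N k *ᵥ ψ k)).re
        = p k * expVal (N k) (ψ k) := by
      rw [smul_eq_mul, Complex.re_ofReal_mul]; rfl
    linarith [h1, h2.symm.le]
  -- Step 2: the traces sum to trace Λ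
  have step2 : ∑ k, (Matrix.trace (Λ * N k)).re = (Matrix.trace Λ).re := by
    rw [← Complex.re_sum]
    congr 1
    rw [← Matrix.trace_sum, ← Matrix.mul_sum, hN.2, Matrix.mul_one]
  -- Step 3: trace Λ in terms of the c k
  have step3 : (Matrix.trace Λ).re = ∑ k, W k * (c k).re := by
    have hΛeq : Λ = (∑ ℓ, W ℓ • proj (ψ ℓ)) * Λ⁻¹ := by
      have h := Matrix.mul_nonsing_inv_cancel_right (A := Λ) Λ hdet
      rw [hΛΛ] at h
      exact h.symm
    conv_lhs => rw [hΛeq]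
    rw [Matrix.sum_mul, Matrix.trace_sum, Complex.re_sum]
    refine Finset.sum_congr rfl fun k _ => ?_
    rw [smul_mul_assoc, Matrix.trace_smul, trace_proj_mul, Complex.smul_re]
    rfl
  -- Step 4: success probability of the BWSRM equals the same sum
  have step4 : ∑ k, p k * expVal (M k) (ψ k) = ∑ k, W k * (c k).re := by
    refine Finset.sum_congr rfl fun k _ => ?_
    have hMV : (M k) *ᵥ ψ k = W k • ((c k) • (Λ⁻¹ *ᵥ ψ k)) := by
      rw [hM k, ← Matrix.mulVec_mulVec, ← Matrix.mulVec_mulVec, smul_mulVec,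
        proj_mulVec, Matrix.mulVec_smul, Matrix.mulVec_smul]
    have hEV : expVal (M k) (ψ k) = W k * ((c k).re) ^ 2 := by
      unfold expVal
      rw [hMV, dotProduct_smul, dotProduct_smul, smul_eq_mul,
        show star (ψ k) ⬝ᵥ Λ⁻¹ *ᵥ ψ k = c k from rfl, Complex.smul_re]
      have : (c k * c k).re = ((c k).re) ^ 2 := by
        rw [hcim k]
        simp [← Complex.ofReal_mul, sq]
      rw [this, smul_eq_mul]
    rw [hEV]
    rcases eq_or_lt_of_le (hW k) with h | h
    · rw [← h]; ring
    · have he := heq k h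
      have : p k * (W k * ((c k).re) ^ 2) = W k * (c k).re * (p k * (c k).re) := by ring
      rw [this, he, mul_one]
  calc ∑ k, p k * expVal (N k) (ψ k)
      ≤ ∑ k, (Matrix.trace (Λ * N k)).re := Finset.sum_le_sum fun k _ => step1 k
    _ = (Matrix.trace Λ).re := step2
    _ = ∑ k, W k * (c k).re := step3
    _ = ∑ k, p k * expVal (M k) (ψ k) := step4.symm
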